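/- arXiv:0909.0608 — 7 statements merged into one kernel-verified Lean document; each statement's English description precedes it below -/
import Mathlib

section
/- Let d and m₀ be two distinct positive probability vectors on a finite set T, and let c satisfy 0 ≤ c < K²(d, m₀). Then there exists a unique π ∈ [0,1] such that the vector p̂ = π·d + (1−π)·m₀ satisfies K²(p̂, m₀) = c, and this p̂ minimizes L²(d, p) over all positive probability vectors p with K²(p, m₀) ≤ c; in particular the constrained minimum of L²(d, ·) is attained on the boundary {p : K²(p, m₀) = c}. -/
open Finset

/-- A positive probability vector on `Fin N`. -/
def IsPPV {N : ℕ} (p : Fin N → ℝ) : Prop := (∀ t, 0 < p t) ∧ ∑ t, p t = 1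

/-- Kullback–Leibler distance `K²(p, m) = ∑ m(t) log(m(t)/p(t))`. -/
noncomputable def Ksq {N : ℕ} (p m : Fin N → ℝ) : ℝ := ∑ t, m t * Real.log (m t / p t)

/-- Likelihood distance `L²(d, p) = ∑ d(t) log(d(t)/p(t))`. -/
noncomputable def Lsq {N : ℕ} (d p : Fin N → ℝ) : ℝ := ∑ t, d t * Real.log (d t / p t)

lemma gibbs_aux {N : ℕ} {a b : Fin N → ℝ} (ha : IsPPV a) (hb : IsPPV b) :
    ∑ t, a t * Real.log (b t / a t) ≤ 0 := by
  have h1 : ∑ t, a t * Real.log (b t / a t) ≤ ∑ t, (b t - a t) := by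
    apply Finset.sum_le_sum
    intro t _
    have hlog := Real.log_le_sub_one_of_pos (div_pos (hb.1 t) (ha.1 t))
    have h2 := mul_le_mul_of_nonneg_left hlog (ha.1 t).le
    calc a t * Real.log (b t / a t) ≤ a t * (b t / a t - 1) := h2
      _ = b t - a t := by
        field_simp [(ha.1 t).ne']
  have h3 : ∑ t, (b t - a t) = 0 := by
    rw [Finset.sum_sub_distrib, ha.2, hb.2]; ring
  linarith

lemma gibbs_aux_lt {N : ℕ} {a b : Fin N → ℝ} (ha : IsPPV a) (hb : IsPPV b) (hab : a ≠ b) :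
    ∑ t, a t * Real.log (b t / a t) < 0 := by
  obtain ⟨t₀, ht₀⟩ := Function.ne_iff.mp hab
  have h1 : ∑ t, a t * Real.log (b t / a t) < ∑ t, (b t - a t) := by
    apply Finset.sum_lt_sum
    · intro t _
      have hlog := Real.log_le_sub_one_of_pos (div_pos (hb.1 t) (ha.1 t))
      have h2 := mul_le_mul_of_nonneg_left hlog (ha.1 t).le
      calc a t * Real.log (b t / a t) ≤ a t * (b t / a t - 1) := h2
        _ = b t - a t := by
          field_simp [(ha.1 t).ne']
    · refine ⟨t₀, Finset.mem_univ _, ?_⟩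
      have hne1 : b t₀ / a t₀ ≠ 1 := by
        intro h1
        exact ht₀ ((div_eq_one_iff_eq (ha.1 t₀).ne').mp h1).symm
      have hlog := Real.log_lt_sub_one_of_pos (div_pos (hb.1 t₀) (ha.1 t₀)) hne1
      have h2 := mul_lt_mul_of_pos_left hlog (ha.1 t₀)
      calc a t₀ * Real.log (b t₀ / a t₀) < a t₀ * (b t₀ / a t₀ - 1) := h2
        _ = b t₀ - a t₀ := by
          field_simp [(ha.1 t₀).ne']
  have h3 : ∑ t, (b t - a t) = 0 := by
    rw [Finset.sum_sub_distrib, ha.2, hb.2]; ring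
  linarith

lemma sum_log_div_flip {N : ℕ} {a b : Fin N → ℝ} (ha : ∀ t, 0 < a t) (hb : ∀ t, 0 < b t) :
    ∑ t, a t * Real.log (a t / b t) = -∑ t, a t * Real.log (b t / a t) := by
  rw [← Finset.sum_neg_distrib]
  refine Finset.sum_congr rfl fun t _ => ?_
  rw [Real.log_div (ha t).ne' (hb t).ne', Real.log_div (hb t).ne' (ha t).ne']
  ring

lemma gibbs_nonneg {N : ℕ} {a b : Fin N → ℝ} (ha : IsPPV a) (hb : IsPPV b) :
    0 ≤ ∑ t, a t * Real.log (a t / b t) := by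
  rw [sum_log_div_flip ha.1 hb.1]
  linarith [gibbs_aux ha hb]

lemma gibbs_pos {N : ℕ} {a b : Fin N → ℝ} (ha : IsPPV a) (hb : IsPPV b) (hab : a ≠ b) :
    0 < ∑ t, a t * Real.log (a t / b t) := by
  rw [sum_log_div_flip ha.1 hb.1]
  linarith [gibbs_aux_lt ha hb hab]

lemma ppv_mix {N : ℕ} {d m₀ : Fin N → ℝ} (hd : IsPPV d) (hm : IsPPV m₀) {π : ℝ}
    (h0 : 0 ≤ π) (h1 : π ≤ 1) : IsPPV (fun t => π * d t + (1 - π) * m₀ t) := by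
  constructor
  · intro t
    show 0 < π * d t + (1 - π) * m₀ t
    rcases eq_or_lt_of_le h0 with h | h
    · rw [← h]; simpa using hm.1 t
    · have h2 : 0 < π * d t := mul_pos h (hd.1 t)
      have h3 : 0 ≤ (1 - π) * m₀ t := mul_nonneg (by linarith) (hm.1 t).le
      linarith
  · rw [Finset.sum_add_distrib, ← Finset.mul_sum, ← Finset.mul_sum, hd.2, hm.2]; ring

lemma Ksq_eq_sub {N : ℕ} {p m : Fin N → ℝ} (hp : ∀ t, 0 < p t) (hm : ∀ t, 0 < m t) :
    Ksq p m = ∑ t, m t * Real.log (m t) - ∑ t, m t * Real.log (p t) := by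
  rw [Ksq, ← Finset.sum_sub_distrib]
  refine Finset.sum_congr rfl fun t _ => ?_
  rw [Real.log_div (hm t).ne' (hp t).ne']
  ring

lemma Lsq_eq_sub {N : ℕ} {d p : Fin N → ℝ} (hd : ∀ t, 0 < d t) (hp : ∀ t, 0 < p t) :
    Lsq d p = ∑ t, d t * Real.log (d t) - ∑ t, d t * Real.log (p t) := by
  rw [Lsq, ← Finset.sum_sub_distrib]
  refine Finset.sum_congr rfl fun t _ => ?_
  rw [Real.log_div (hd t).ne' (hp t).ne']
  ring

lemma Ksq_mix_pos {N : ℕ} {d m₀ : Fin N → ℝ} (hd : IsPPV d) (hm : IsPPV m₀) (hne : d ≠ m₀)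
    {π : ℝ} (h0 : 0 < π) (h1 : π ≤ 1) :
    0 < Ksq (fun t => π * d t + (1 - π) * m₀ t) m₀ := by
  apply gibbs_pos hm (ppv_mix hd hm h0.le h1)
  intro h
  apply hne
  funext t
  have ht := congrFun h t
  change m₀ t = π * d t + (1 - π) * m₀ t at ht
  have : π * (d t - m₀ t) = 0 := by linarith
  rcases mul_eq_zero.mp this with h' | h'
  · exact absurd h' h0.ne'
  · linarith

lemma Ksq_mix_zero {N : ℕ} {d m₀ : Fin N → ℝ} (hm : IsPPV m₀) :
    Ksq (fun t => (0:ℝ) * d t + (1 - 0) * m₀ t) m₀ = 0 := by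
  rw [Ksq]
  apply Finset.sum_eq_zero
  intro t _
  have : (0:ℝ) * d t + (1 - 0) * m₀ t = m₀ t := by ring
  rw [this, div_self (hm.1 t).ne', Real.log_one, mul_zero]

/-- Strict monotonicity of `π ↦ K²(π d + (1-π) m₀, m₀)` on `[0,1]`. -/
lemma Ksq_mix_strictMono {N : ℕ} {d m₀ : Fin N → ℝ} (hd : IsPPV d) (hm : IsPPV m₀)
    (hne : d ≠ m₀) {a b : ℝ} (h0 : 0 ≤ a) (hab : a < b) (hb1 : b ≤ 1) :
    Ksq (fun t => a * d t + (1 - a) * m₀ t) m₀ <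
      Ksq (fun t => b * d t + (1 - b) * m₀ t) m₀ := by
  have hbpos : 0 < b := lt_of_le_of_lt h0 hab
  have hKb : 0 < Ksq (fun t => b * d t + (1 - b) * m₀ t) m₀ := Ksq_mix_pos hd hm hne hbpos hb1
  rcases eq_or_lt_of_le h0 with h | h
  · rw [← h, Ksq_mix_zero hm]; exact hKb
  · -- 0 < a < b; use concavity of log
    set μ : ℝ := a / b with hμ
    have hμ0 : 0 < μ := div_pos h hbpos
    have hμ1 : μ < 1 := (div_lt_one hbpos).mpr hab
    have key : Ksq (fun t => a * d t + (1 - a) * m₀ t) m₀ ≤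
        μ * Ksq (fun t => b * d t + (1 - b) * m₀ t) m₀ := by
      rw [Ksq, Ksq, Finset.mul_sum]
      apply Finset.sum_le_sum
      intro t _
      have hx : m₀ t ∈ Set.Ioi (0:ℝ) := hm.1 t
      have hy : b * d t + (1 - b) * m₀ t ∈ Set.Ioi (0:ℝ) :=
        (ppv_mix hd hm hbpos.le hb1).1 t
      have hconc := strictConcaveOn_log_Ioi.concaveOn.2 hx hy
        (by linarith : (0:ℝ) ≤ 1 - μ) hμ0.le (by ring)
      simp only [smul_eq_mul] at hconc
      have hμb : μ * b = a := div_mul_cancel₀ a hbpos.ne'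
      have hmixeq : (1 - μ) * m₀ t + μ * (b * d t + (1 - b) * m₀ t)
          = a * d t + (1 - a) * m₀ t := by
        linear_combination (d t - m₀ t) * hμb
      rw [hmixeq] at hconc
      -- hconc : (1-μ) log (m₀ t) + μ log (mix b t) ≤ log (mix a t)
      have hma : 0 < a * d t + (1 - a) * m₀ t := (ppv_mix hd hm h.le (by linarith)).1 t
      rw [Real.log_div (hm.1 t).ne' hma.ne', Real.log_div (hm.1 t).ne' (Set.mem_Ioi.mp hy).ne']
      nlinarith [mul_le_mul_of_nonneg_left hconc (hm.1 t).le]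
    nlinarith

/-- Continuity of `π ↦ K²(π d + (1-π) m₀, m₀)` on `[0,1]`. -/
lemma Ksq_mix_continuousOn {N : ℕ} {d m₀ : Fin N → ℝ} (hd : IsPPV d) (hm : IsPPV m₀) :
    ContinuousOn (fun π : ℝ => Ksq (fun t => π * d t + (1 - π) * m₀ t) m₀)
      (Set.Icc 0 1) := by
  unfold Ksq
  apply continuousOn_finset_sum
  intro t _
  apply ContinuousOn.mul continuousOn_const
  apply ContinuousOn.log
  · apply ContinuousOn.div continuousOn_const
    · exact ((continuous_id.mul continuous_const).add
        ((continuous_const.sub continuous_id).mul continuous_const)).continuousOn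
    · intro π hπ
      exact ((ppv_mix hd hm hπ.1 hπ.2).1 t).ne'
  · intro π hπ
    exact (div_pos (hm.1 t) ((ppv_mix hd hm hπ.1 hπ.2).1 t)).ne'

/-- Theorem 1: for `0 ≤ c < K²(d, m₀)` there is a unique `π ∈ [0,1]` such that
`p̂ = π d + (1-π) m₀` lies on the boundary `K²(p̂, m₀) = c`, and this `p̂` minimizes
`L²(d, ·)` over the tube `{p : K²(p, m₀) ≤ c}`. -/
theorem tube_single_element_solution {N : ℕ} (hN : 1 ≤ N)
    (d m₀ : Fin N → ℝ) (hd : IsPPV d) (hm : IsPPV m₀) (hne : d ≠ m₀)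
    (c : ℝ) (hc0 : 0 ≤ c) (hc1 : c < Ksq d m₀) :
    ∃ π : ℝ, π ∈ Set.Icc (0 : ℝ) 1 ∧
      Ksq (fun t => π * d t + (1 - π) * m₀ t) m₀ = c ∧
      (∀ p : Fin N → ℝ, IsPPV p → Ksq p m₀ ≤ c →
        Lsq d (fun t => π * d t + (1 - π) * m₀ t) ≤ Lsq d p) ∧
      (∀ π' : ℝ, π' ∈ Set.Icc (0 : ℝ) 1 →
        Ksq (fun t => π' * d t + (1 - π') * m₀ t) m₀ = c → π' = π) := by
  set F : ℝ → ℝ := fun π => Ksq (fun t => π * d t + (1 - π) * m₀ t) m₀ with hF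
  have hF0 : F 0 = 0 := Ksq_mix_zero hm
  have hF1 : F 1 = Ksq d m₀ := by
    simp only [hF]
    congr 1
    funext t
    ring
  -- existence of π via IVT
  have hsub := intermediate_value_Icc (by norm_num : (0:ℝ) ≤ 1) (Ksq_mix_continuousOn hd hm)
  have hcmem : c ∈ Set.Icc (F 0) (F 1) := by
    rw [hF0, hF1]; exact ⟨hc0, hc1.le⟩
  obtain ⟨π, hπmem, hπc₀⟩ := hsub hcmem
  have hπc : Ksq (fun t => π * d t + (1 - π) * m₀ t) m₀ = c := hπc₀
  refine ⟨π, hπmem, hπc, ?_, ?_⟩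
  · -- minimization
    intro p hp hpc
    set q : Fin N → ℝ := fun t => π * d t + (1 - π) * m₀ t with hq
    have hqppv : IsPPV q := ppv_mix hd hm hπmem.1 hπmem.2
    rcases eq_or_lt_of_le hπmem.1 with h0 | h0
    · -- π = 0 : c = 0, constraint forces p = m₀ = q
      have hc : c = 0 := by
        rw [← hπc, hq, ← h0]
        exact Ksq_mix_zero hm
      have hK0 : Ksq p m₀ = 0 := le_antisymm (by linarith) (gibbs_nonneg hm hp)
      have hpm : m₀ = p := by
        by_contra hne'
        exact absurd hK0 (gibbs_pos hm hp hne').ne'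
      have hqm : q = m₀ := by funext t; simp only [hq]; rw [← h0]; ring
      rw [hqm, hpm]
    · -- π > 0
      have hKq : Ksq q m₀ = c := hπc
      -- B' := ∑ m₀ (log q - log p) = Ksq p m₀ - Ksq q m₀ ≤ 0
      have hB : ∑ t, m₀ t * Real.log (q t) - ∑ t, m₀ t * Real.log (p t) ≤ 0 := by
        have e1 := Ksq_eq_sub hp.1 hm.1
        have e2 := Ksq_eq_sub hqppv.1 hm.1
        have : Ksq p m₀ - Ksq q m₀ ≤ 0 := by rw [hKq]; linarith
        rw [e1, e2] at this
        linarith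
      -- A := ∑ q (log q - log p) ≥ 0 (Gibbs)
      have hA : 0 ≤ ∑ t, q t * Real.log (q t) - ∑ t, q t * Real.log (p t) := by
        have h' : (0:ℝ) ≤ Ksq p q := gibbs_nonneg hqppv hp
        rw [Ksq_eq_sub hp.1 hqppv.1] at h'
        exact h'
      -- split ∑ q log g = π ∑ d log g + (1-π) ∑ m₀ log g
      have hsplit : ∀ g : Fin N → ℝ,
          ∑ t, q t * Real.log (g t)
            = π * ∑ t, d t * Real.log (g t) + (1 - π) * ∑ t, m₀ t * Real.log (g t) := by
        intro g
        rw [Finset.mul_sum, Finset.mul_sum, ← Finset.sum_add_distrib]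
        refine Finset.sum_congr rfl fun t _ => ?_
        simp only [hq]; ring
      have hAsplit := hsplit q
      have hAsplit' := hsplit p
      have hgoal : 0 ≤ ∑ t, d t * Real.log (q t) - ∑ t, d t * Real.log (p t) := by
        have hπd : π * (∑ t, d t * Real.log (q t) - ∑ t, d t * Real.log (p t))
            = (∑ t, q t * Real.log (q t) - ∑ t, q t * Real.log (p t))
              - (1 - π) * (∑ t, m₀ t * Real.log (q t) - ∑ t, m₀ t * Real.log (p t)) := by
          rw [hAsplit, hAsplit']; ring
        have h1π : 0 ≤ 1 - π := by linarith [hπmem.2]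
        nlinarith [mul_nonpos_of_nonneg_of_nonpos h1π hB]
      have e1 := Lsq_eq_sub hd.1 hqppv.1
      have e2 := Lsq_eq_sub hd.1 hp.1
      rw [e1, e2]
      linarith
  · -- uniqueness
    intro π' hπ'mem hπ'c
    by_contra hne'
    rcases lt_or_gt_of_ne hne' with h | h
    · have := Ksq_mix_strictMono hd hm hne hπ'mem.1 h hπmem.2
      rw [hπc, hπ'c] at this
      exact lt_irrefl c this
    · have := Ksq_mix_strictMono hd hm hne hπmem.1 h hπ'mem.2
      rw [hπc, hπ'c] at this
      exact lt_irrefl c this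
end

section
/- Let d and m₀ be two distinct positive probability vectors on a finite set T and let 0 ≤ c < K²(d, m₀). If a positive probability vector p* minimizes L²(d, p) over the set {p : p a positive probability vector, K²(p, m₀) ≤ c}, then K²(p*, m₀) = c; that is, every constrained minimizer lies on the boundary of the tube. -/
open Finset

lemma gibbs_pos_s1 {N : ℕ} {p q : Fin N → ℝ} (hp : IsPPV p) (hq : IsPPV q) (hne : p ≠ q) :
    0 < ∑ t, p t * Real.log (p t / q t) := by
  have key : ∑ t, p t * Real.log (q t / p t) < 0 := by
    obtain ⟨t0, ht0⟩ := Function.ne_iff.mp hne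
    have h1 : ∀ t ∈ Finset.univ, p t * Real.log (q t / p t) ≤ p t * (q t / p t - 1) := by
      intro t _
      exact mul_le_mul_of_nonneg_left
        (Real.log_le_sub_one_of_pos (div_pos (hq.1 t) (hp.1 t))) (hp.1 t).le
    have h2 : p t0 * Real.log (q t0 / p t0) < p t0 * (q t0 / p t0 - 1) := by
      refine mul_lt_mul_of_pos_left ?_ (hp.1 t0)
      refine Real.log_lt_sub_one_of_pos (div_pos (hq.1 t0) (hp.1 t0)) ?_
      intro h
      exact ht0 ((div_eq_one_iff_eq (hp.1 t0).ne').mp h).symm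
    calc ∑ t, p t * Real.log (q t / p t)
        < ∑ t, p t * (q t / p t - 1) :=
          Finset.sum_lt_sum h1 ⟨t0, Finset.mem_univ t0, h2⟩
      _ = 0 := by
          have h3 : ∀ t, p t * (q t / p t - 1) = q t - p t := by
            intro t; rw [mul_sub, mul_one, mul_div_cancel₀ _ (hp.1 t).ne']
          rw [Finset.sum_congr rfl fun t _ => h3 t, Finset.sum_sub_distrib, hp.2, hq.2,
            sub_self]
  have heq : ∑ t, p t * Real.log (p t / q t) = -∑ t, p t * Real.log (q t / p t) := by
    rw [← Finset.sum_neg_distrib]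
    refine Finset.sum_congr rfl fun t _ => ?_
    rw [Real.log_div (hp.1 t).ne' (hq.1 t).ne', Real.log_div (hq.1 t).ne' (hp.1 t).ne']
    ring
  rw [heq]
  linarith

/-- Every constrained minimizer of `L²(d, ·)` over the tube `{p : K²(p, m₀) ≤ c}`
with `0 ≤ c < K²(d, m₀)` lies on the boundary of the tube. -/
theorem minimizer_on_boundary {N : ℕ} (hN : 1 ≤ N)
    (d m₀ : Fin N → ℝ) (hd : IsPPV d) (hm : IsPPV m₀) (hne : d ≠ m₀)
    (c : ℝ) (hc0 : 0 ≤ c) (hc1 : c < Ksq d m₀)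
    (pstar : Fin N → ℝ) (hpstar : IsPPV pstar) (hstarmem : Ksq pstar m₀ ≤ c)
    (hmin : ∀ p : Fin N → ℝ, IsPPV p → Ksq p m₀ ≤ c → Lsq d pstar ≤ Lsq d p) :
    Ksq pstar m₀ = c := by
  by_contra hneq
  have hlt : Ksq pstar m₀ < c := lt_of_le_of_ne hstarmem hneq
  -- pstar ≠ d
  have hpd : d ≠ pstar := by
    intro h
    rw [h] at hc1
    linarith
  have hLpos : 0 < Lsq d pstar := gibbs_pos_s1 hd hpstar hpd
  -- continuity of ε ↦ Ksq (mix ε) m₀ at 0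
  set F : ℝ → ℝ := fun ε => Ksq (fun t => (1 - ε) * pstar t + ε * d t) m₀ with hF
  have hcont : ContinuousAt F 0 := by
    unfold F Ksq
    apply tendsto_finset_sum
    intro t _
    show ContinuousAt _ 0
    apply ContinuousAt.mul continuousAt_const
    apply ContinuousAt.log
    · apply ContinuousAt.div continuousAt_const
      · fun_prop
      · simpa using (hpstar.1 t).ne'
    · apply div_ne_zero (hm.1 t).ne'
      simpa using (hpstar.1 t).ne'
  have hF0 : F 0 < c := by simpa [hF] using hlt
  have hev : {ε : ℝ | F ε < c} ∈ nhds (0 : ℝ) :=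
    hcont (Iio_mem_nhds hF0)
  obtain ⟨δ, hδ, hball⟩ := Metric.mem_nhds_iff.mp hev
  set ε : ℝ := min (δ / 2) (1 / 2) with hε
  have hε0 : 0 < ε := lt_min (by linarith) (by norm_num)
  have hε1 : ε < 1 := (min_le_right _ _).trans_lt (by norm_num)
  have hεδ : ε < δ := (min_le_left _ _).trans_lt (by linarith)
  have hmem : F ε < c := by
    apply hball
    simp only [Metric.mem_ball, Real.dist_eq, sub_zero]
    rw [abs_of_pos hε0]; exact hεδ
  set p : Fin N → ℝ := fun t => (1 - ε) * pstar t + ε * d t with hp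
  have hpPPV : IsPPV p := by
    constructor
    · intro t
      show 0 < (1 - ε) * pstar t + ε * d t
      have h1 := hpstar.1 t
      have h2 := hd.1 t
      nlinarith
    · simp only [hp, Finset.sum_add_distrib, ← Finset.mul_sum, hpstar.2, hd.2]
      ring
  -- Lsq d p ≤ (1-ε) * Lsq d pstar
  have hconc : ∀ t, (1 - ε) * Real.log (pstar t) + ε * Real.log (d t) ≤ Real.log (p t) := by
    intro t
    have := strictConcaveOn_log_Ioi.concaveOn.2 (Set.mem_Ioi.mpr (hpstar.1 t))
      (Set.mem_Ioi.mpr (hd.1 t)) (by linarith : (0:ℝ) ≤ 1 - ε) hε0.le (by ring)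
    simpa [smul_eq_mul, hp] using this
  have hLle : Lsq d p ≤ (1 - ε) * Lsq d pstar := by
    unfold Lsq
    rw [Finset.mul_sum]
    apply Finset.sum_le_sum
    intro t _
    have hld : Real.log (d t / p t) = Real.log (d t) - Real.log (p t) :=
      Real.log_div (hd.1 t).ne' (hpPPV.1 t).ne'
    have hls : Real.log (d t / pstar t) = Real.log (d t) - Real.log (pstar t) :=
      Real.log_div (hd.1 t).ne' (hpstar.1 t).ne'
    rw [hld, hls]
    have h := hconc t
    nlinarith [hd.1 t]
  have := hmin p hpPPV hmem.le
  nlinarith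
end

section
/- Let d and m₀ be two distinct positive probability vectors on a finite set T. The function f(π) = K²(π·d + (1−π)·m₀, m₀) is continuous and strictly increasing on [0,1], with f(0) = 0 and f(1) = K²(d, m₀). Consequently, for every c with 0 ≤ c ≤ K²(d, m₀) there is a unique π ∈ [0,1] with K²(π·d + (1−π)·m₀, m₀) = c, so there is a one-to-one correspondence between the mixing weight π and the tube radius c. -/
open Finset

/-- The map `π ↦ K²(π d + (1-π) m₀, m₀)` is continuous and strictly increasing on `[0,1]`,
taking the value `0` at `π = 0` and `K²(d, m₀)` at `π = 1`; hence there is a one-to-one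
correspondence between the mixing weight `π ∈ [0,1]` and the tube radius
`c ∈ [0, K²(d, m₀)]`. -/
theorem pi_c_correspondence {N : ℕ} (hN : 1 ≤ N)
    (d m₀ : Fin N → ℝ) (hd : IsPPV d) (hm : IsPPV m₀) (hne : d ≠ m₀) :
    ContinuousOn (fun π : ℝ => Ksq (fun t => π * d t + (1 - π) * m₀ t) m₀)
        (Set.Icc (0 : ℝ) 1) ∧
    StrictMonoOn (fun π : ℝ => Ksq (fun t => π * d t + (1 - π) * m₀ t) m₀)
        (Set.Icc (0 : ℝ) 1) ∧
    Ksq (fun t => (0 : ℝ) * d t + (1 - 0) * m₀ t) m₀ = 0 ∧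
    Ksq (fun t => (1 : ℝ) * d t + (1 - 1) * m₀ t) m₀ = Ksq d m₀ ∧
    ∀ c : ℝ, 0 ≤ c → c ≤ Ksq d m₀ →
      ∃! π : ℝ, π ∈ Set.Icc (0 : ℝ) 1 ∧
        Ksq (fun t => π * d t + (1 - π) * m₀ t) m₀ = c := by
  obtain ⟨hd0, hd1⟩ := hd
  obtain ⟨hm0, hm1⟩ := hm
  set F : ℝ → ℝ := fun π : ℝ => Ksq (fun t => π * d t + (1 - π) * m₀ t) m₀ with hF
  -- positivity of the mixture
  have hg : ∀ (π : ℝ), π ∈ Set.Icc (0:ℝ) 1 → ∀ t, 0 < π * d t + (1 - π) * m₀ t := by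
    intro π hπ t
    rcases hπ with ⟨h0, h1⟩
    rcases eq_or_lt_of_le h1 with rfl | h1
    · have := hd0 t; nlinarith
    · have ha : 0 < (1 - π) * m₀ t := mul_pos (by linarith) (hm0 t)
      have hb : 0 ≤ π * d t := mul_nonneg h0 (hd0 t).le
      linarith
  -- continuity
  have hcont : ContinuousOn F (Set.Icc 0 1) := by
    unfold F
    unfold Ksq
    apply continuousOn_finset_sum
    intro t _
    apply ContinuousOn.mul continuousOn_const
    apply ContinuousOn.log
    · exact ContinuousOn.div continuousOn_const (by fun_prop)
        (fun π hπ => (hg π hπ t).ne')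
    · intro π hπ
      exact (div_pos (hm0 t) (hg π hπ t)).ne'
  -- derivative
  have hderiv : ∀ π ∈ Set.Ioo (0:ℝ) 1,
      HasDerivAt F
        (∑ t, m₀ t * ((m₀ t - d t) / (π * d t + (1 - π) * m₀ t))) π := by
    intro π hπ
    have hπ' : π ∈ Set.Icc (0:ℝ) 1 := ⟨hπ.1.le, hπ.2.le⟩
    unfold F
    unfold Ksq
    apply HasDerivAt.fun_sum
    intro t _
    have hu : HasDerivAt (fun x : ℝ => x * d t + (1 - x) * m₀ t) (d t - m₀ t) π := by
      have h1 : HasDerivAt (fun x : ℝ => x * d t) (d t) π := by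
        simpa using (hasDerivAt_id π).mul_const (d t)
      have h2 : HasDerivAt (fun x : ℝ => (1 - x) * m₀ t) (-(m₀ t)) π := by
        have := ((hasDerivAt_const π (1:ℝ)).sub (hasDerivAt_id π)).mul_const (m₀ t)
        simpa using this
      simpa [sub_eq_add_neg] using h1.fun_add h2
    have hupos : 0 < π * d t + (1 - π) * m₀ t := hg π hπ' t
    have hdiv : HasDerivAt (fun x : ℝ => m₀ t / (x * d t + (1 - x) * m₀ t))
        ((0 * (π * d t + (1 - π) * m₀ t) - m₀ t * (d t - m₀ t))
          / (π * d t + (1 - π) * m₀ t) ^ 2) π :=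
      (hasDerivAt_const π (m₀ t)).div hu hupos.ne'
    have hlog := hdiv.log (div_pos (hm0 t) hupos).ne'
    have hfin := hlog.const_mul (m₀ t)
    refine hfin.congr_deriv ?_
    have hm' : m₀ t ≠ 0 := (hm0 t).ne'
    field_simp
    ring
  -- derivative positivity
  have hderiv_pos : ∀ π ∈ Set.Ioo (0:ℝ) 1,
      0 < ∑ t, m₀ t * ((m₀ t - d t) / (π * d t + (1 - π) * m₀ t)) := by
    intro π hπ
    have hπ' : π ∈ Set.Icc (0:ℝ) 1 := ⟨hπ.1.le, hπ.2.le⟩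
    have key : ∀ t, m₀ t * ((m₀ t - d t) / (π * d t + (1 - π) * m₀ t))
        = (m₀ t - d t) + π * ((d t - m₀ t)^2 / (π * d t + (1 - π) * m₀ t)) := by
      intro t
      have h := (hg π hπ' t).ne'
      rw [mul_div_assoc', mul_div_assoc', add_div' _ _ _ h, div_eq_div_iff h h]
      ring
    rw [Finset.sum_congr rfl (fun t _ => key t), Finset.sum_add_distrib]
    have h1 : ∑ t, (m₀ t - d t) = 0 := by
      rw [Finset.sum_sub_distrib, hd1, hm1]; ring
    rw [h1, zero_add]
    obtain ⟨t₀, ht₀⟩ : ∃ t, d t ≠ m₀ t := by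
      by_contra h; push_neg at h; exact hne (funext h)
    apply Finset.sum_pos' ?_ ⟨t₀, Finset.mem_univ t₀, ?_⟩
    · intro t _
      exact mul_nonneg hπ.1.le (div_nonneg (sq_nonneg _) (hg π hπ' t).le)
    · have hne0 : d t₀ - m₀ t₀ ≠ 0 := sub_ne_zero.mpr ht₀
      have hsq : 0 < (d t₀ - m₀ t₀)^2 := lt_of_le_of_ne (sq_nonneg _) (Ne.symm (pow_ne_zero 2 hne0))
      exact mul_pos hπ.1 (div_pos hsq (hg π hπ' t₀))
  -- strict monotonicity
  have hmono : StrictMonoOn F (Set.Icc 0 1) := by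
    apply strictMonoOn_of_deriv_pos (convex_Icc 0 1) hcont
    intro x hx
    rw [interior_Icc] at hx
    rw [(hderiv x hx).deriv]
    exact hderiv_pos x hx
  -- endpoint values
  have hzero : Ksq (fun t => (0:ℝ) * d t + (1 - 0) * m₀ t) m₀ = 0 := by
    unfold Ksq
    apply Finset.sum_eq_zero
    intro t _
    simp [div_self (hm0 t).ne']
  have hone : Ksq (fun t => (1:ℝ) * d t + (1 - 1) * m₀ t) m₀ = Ksq d m₀ := by
    simp [Ksq]
  refine ⟨hcont, hmono, hzero, hone, ?_⟩
  intro c hc0 hc1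
  have hF0 : F 0 = 0 := hzero
  have hF1 : F 1 = Ksq d m₀ := hone
  have hc : c ∈ Set.Icc (F 0) (F 1) := by rw [hF0, hF1]; exact ⟨hc0, hc1⟩
  obtain ⟨π, hπmem, hπeq⟩ :=
    intermediate_value_Icc (by norm_num : (0:ℝ) ≤ 1) hcont hc
  exact ⟨π, ⟨hπmem, hπeq⟩, fun y hy => hmono.injOn hy.1 hπmem (hy.2.trans hπeq.symm)⟩
end

section
/- Let d and m₀ be positive probability vectors on a finite set T and fix π ∈ (0,1). Then the function p ↦ π·L²(d, p) + (1−π)·K²(p, m₀), defined on positive probability vectors p, attains its minimum at p = π·d + (1−π)·m₀, and this minimizer is unique. -/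
open Finset

lemma kl_nonneg_aux {N : ℕ} {w p : Fin N → ℝ} (hw : IsPPV w) (hp : IsPPV p) :
    0 ≤ ∑ t, w t * Real.log (w t / p t) ∧
    ((∑ t, w t * Real.log (w t / p t)) = 0 → w = p) := by
  obtain ⟨hwpos, hwsum⟩ := hw
  obtain ⟨hppos, hpsum⟩ := hp
  have key : ∀ t : Fin N, w t * Real.log (p t / w t) ≤ p t - w t := by
    intro t
    have h1 : Real.log (p t / w t) ≤ p t / w t - 1 :=
      Real.log_le_sub_one_of_pos (div_pos (hppos t) (hwpos t))
    calc w t * Real.log (p t / w t) ≤ w t * (p t / w t - 1) :=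
          mul_le_mul_of_nonneg_left h1 (hwpos t).le
      _ = p t - w t := by rw [mul_sub, mul_div_cancel₀ _ (hwpos t).ne', mul_one]
  have hsum : ∑ t, w t * Real.log (p t / w t) ≤ 0 := by
    calc ∑ t, w t * Real.log (p t / w t) ≤ ∑ t, (p t - w t) :=
          Finset.sum_le_sum (fun t _ => key t)
      _ = 0 := by rw [Finset.sum_sub_distrib, hwsum, hpsum]; ring
  have hneg : ∀ t, w t * Real.log (w t / p t) = -(w t * Real.log (p t / w t)) := by
    intro t
    rw [Real.log_div (hwpos t).ne' (hppos t).ne', Real.log_div (hppos t).ne' (hwpos t).ne']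
    ring
  constructor
  · calc (0:ℝ) = -0 := by ring
      _ ≤ -∑ t, w t * Real.log (p t / w t) := by linarith
      _ = ∑ t, w t * Real.log (w t / p t) := by
          rw [← Finset.sum_neg_distrib]; exact Finset.sum_congr rfl fun t _ => (hneg t).symm
  · intro h0
    by_contra hne
    obtain ⟨t0, ht0⟩ : ∃ t, w t ≠ p t := by
      by_contra h; push_neg at h; exact hne (funext h)
    have hstrict : w t0 * Real.log (p t0 / w t0) < p t0 - w t0 := by
      have hne1 : p t0 / w t0 ≠ 1 := by
        intro h; rw [div_eq_one_iff_eq (hwpos t0).ne'] at h; exact ht0 h.symm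
      have h1 : Real.log (p t0 / w t0) < p t0 / w t0 - 1 :=
        Real.log_lt_sub_one_of_pos (div_pos (hppos t0) (hwpos t0)) hne1
      calc w t0 * Real.log (p t0 / w t0) < w t0 * (p t0 / w t0 - 1) :=
            (mul_lt_mul_iff_right₀ (hwpos t0)).mpr h1
        _ = p t0 - w t0 := by rw [mul_sub, mul_div_cancel₀ _ (hwpos t0).ne', mul_one]
    have hsum' : ∑ t, w t * Real.log (p t / w t) < 0 := by
      have := Finset.sum_lt_sum (fun t _ => key t) ⟨t0, Finset.mem_univ t0, hstrict⟩
      calc ∑ t, w t * Real.log (p t / w t) < ∑ t, (p t - w t) := this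
        _ = 0 := by rw [Finset.sum_sub_distrib, hwsum, hpsum]; ring
    have : ∑ t, w t * Real.log (w t / p t) > 0 := by
      have : ∑ t, w t * Real.log (w t / p t) = -∑ t, w t * Real.log (p t / w t) := by
        rw [← Finset.sum_neg_distrib]; exact Finset.sum_congr rfl fun t _ => hneg t
      rw [this]; linarith
    linarith [h0 ▸ this]

lemma obj_eq {N : ℕ} (d m₀ p : Fin N → ℝ) (hd : IsPPV d) (hm : IsPPV m₀) (hp : IsPPV p)
    (π : ℝ) :
    π * Lsq d p + (1 - π) * Ksq p m₀
      = (∑ t, (π * d t * Real.log (d t) + (1 - π) * m₀ t * Real.log (m₀ t)))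
        - ∑ t, (π * d t + (1 - π) * m₀ t) * Real.log (p t) := by
  unfold Lsq Ksq
  rw [Finset.mul_sum, Finset.mul_sum, ← Finset.sum_add_distrib, ← Finset.sum_sub_distrib]
  refine Finset.sum_congr rfl fun t _ => ?_
  rw [Real.log_div (hd.1 t).ne' (hp.1 t).ne', Real.log_div (hm.1 t).ne' (hp.1 t).ne']
  ring

/-- For fixed `π ∈ (0,1)`, the objective `p ↦ π L²(d, p) + (1-π) K²(p, m₀)` attains
its minimum over positive probability vectors at the convex combination
`p̂ = π d + (1-π) m₀`, and this minimizer is unique. -/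
theorem convex_combination_minimizer {N : ℕ} (hN : 1 ≤ N)
    (d m₀ : Fin N → ℝ) (hd : IsPPV d) (hm : IsPPV m₀)
    (π : ℝ) (hπ : π ∈ Set.Ioo (0 : ℝ) 1) :
    (∀ p : Fin N → ℝ, IsPPV p →
      π * Lsq d (fun t => π * d t + (1 - π) * m₀ t)
        + (1 - π) * Ksq (fun t => π * d t + (1 - π) * m₀ t) m₀
      ≤ π * Lsq d p + (1 - π) * Ksq p m₀) ∧
    (∀ p : Fin N → ℝ, IsPPV p →
      (∀ q : Fin N → ℝ, IsPPV q →
        π * Lsq d p + (1 - π) * Ksq p m₀ ≤ π * Lsq d q + (1 - π) * Ksq q m₀) →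
      p = fun t => π * d t + (1 - π) * m₀ t) := by
  obtain ⟨hπ0, hπ1⟩ := hπ
  set w : Fin N → ℝ := fun t => π * d t + (1 - π) * m₀ t with hw_def
  have hw : IsPPV w := by
    constructor
    · intro t
      have := hd.1 t; have := hm.1 t
      have : 0 < π * d t := mul_pos hπ0 (hd.1 t)
      have : 0 < (1 - π) * m₀ t := mul_pos (by linarith) (hm.1 t)
      simp only [hw_def]; positivity
    · simp only [hw_def]
      rw [Finset.sum_add_distrib, ← Finset.mul_sum, ← Finset.mul_sum, hd.2, hm.2]; ring
  -- difference formula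
  have diff : ∀ p : Fin N → ℝ, IsPPV p →
      (π * Lsq d p + (1 - π) * Ksq p m₀)
        - (π * Lsq d w + (1 - π) * Ksq w m₀)
      = ∑ t, w t * Real.log (w t / p t) := by
    intro p hp
    rw [obj_eq d m₀ p hd hm hp π, obj_eq d m₀ w hd hm hw π]
    have : ∑ t, w t * Real.log (w t / p t)
        = ∑ t, (w t * Real.log (w t) - w t * Real.log (p t)) := by
      refine Finset.sum_congr rfl fun t _ => ?_
      rw [Real.log_div (hw.1 t).ne' (hp.1 t).ne']; ring
    rw [this, Finset.sum_sub_distrib]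
    simp only [hw_def]
    ring
  constructor
  · intro p hp
    have h1 := (kl_nonneg_aux hw hp).1
    have h2 := diff p hp
    linarith
  · intro p hp hmin
    have h1 := (kl_nonneg_aux hw hp).1
    have h2 := diff p hp
    have h3 := hmin w hw
    have h0 : ∑ t, w t * Real.log (w t / p t) = 0 := by linarith
    exact ((kl_nonneg_aux hw hp).2 h0).symm
end

section
/- Let Θ ⊆ ℝ^k be open, let θ ↦ m_θ be a differentiable map from Θ to positive probability vectors on a finite set T (so Σ_t m_θ(t) = 1 for all θ), let d be a positive probability vector on T, fix π ∈ (0,1), and set p_θ = π·d + (1−π)·m_θ. Define the Pearson residual δ_θ(t) = (d(t) − m_θ(t))/m_θ(t), the score u_{θ,j}(t) = (∂m_θ(t)/∂θ_j)/m_θ(t), and the weight ω(δ) = log(1 + π(δ+1)/(1−π)) / (1+δ). Then for each j, the partial derivative of the objective G(θ) = π·L²(d, p_θ) + (1−π)·K²(p_θ, m_θ) satisfies ∂G/∂θ_j = −(1−π)·Σ_t ω(δ_θ(t))·d(t)·u_{θ,j}(t). In particular, θ is a stationary point of G if and only if it solves the weighted estimating equation Σ_t ω(δ_θ(t))·d(t)·u_{θ,j}(t)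 = 0 for all j. -/
open Finset

/-- Pearson residual `δ(t) = (d(t) − m(t))/m(t)`. -/
noncomputable def pearson {N : ℕ} (d m : Fin N → ℝ) (t : Fin N) : ℝ := (d t - m t) / m t

/-- Weight function `ω(δ) = log(1 + π(δ+1)/(1−π)) / (1+δ)`. -/
noncomputable def tubeWeight (π δ : ℝ) : ℝ := Real.log (1 + π * (δ + 1) / (1 - π)) / (1 + δ)

lemma aux_deriv (π b x₀ : ℝ) (hπ0 : 0 < π) (hπ1 : π < 1) (hb : 0 < b) (hx : 0 < x₀) :
    HasDerivAt (fun x => π * (b * Real.log (b / (π * b + (1 - π) * x)))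
      + (1 - π) * (x * Real.log (x / (π * b + (1 - π) * x))))
      ((1 - π) * Real.log (x₀ / (π * b + (1 - π) * x₀))) x₀ := by
  have h1π : 0 < 1 - π := by linarith
  have hq0 : 0 < π * b + (1 - π) * x₀ := by positivity
  have hqd : HasDerivAt (fun x => π * b + (1 - π) * x) (1 - π) x₀ := by
    simpa using ((hasDerivAt_id x₀).const_mul (1 - π)).const_add (π * b)
  have h1 : HasDerivAt (fun x => Real.log (b / (π * b + (1 - π) * x)))
      (-(1 - π) / (π * b + (1 - π) * x₀)) x₀ := by
    have := (((hasDerivAt_const x₀ b).div hqd hq0.ne').log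
      (div_ne_zero hb.ne' hq0.ne'))
    refine this.congr_deriv ?_
    simp only [Pi.div_apply]
    field_simp
    ring
  have h2 : HasDerivAt (fun x => Real.log (x / (π * b + (1 - π) * x)))
      (π * b / ((π * b + (1 - π) * x₀) * x₀)) x₀ := by
    have := (((hasDerivAt_id x₀).div hqd hq0.ne').log
      (div_ne_zero hx.ne' hq0.ne'))
    refine this.congr_deriv ?_
    simp only [Pi.div_apply, id]
    field_simp
    ring
  have h3 := ((h1.const_mul b).const_mul π).add
    (((hasDerivAt_id x₀).mul h2).const_mul (1 - π))
  refine h3.congr_deriv ?_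
  have : x₀ * (π * b / ((π * b + (1 - π) * x₀) * x₀)) = π * b / (π * b + (1 - π) * x₀) := by
    field_simp
  simp only [id_eq, one_mul]
  rw [this]
  field_simp
  ring

/-- The gradient of the tubular objective `G(θ) = π L²(d, p_θ) + (1-π) K²(p_θ, m_θ)`,
with `p_θ = π d + (1-π) m_θ`, has `j`-th partial derivative
`−(1−π) ∑_t ω(δ_θ(t)) d(t) u_{θ,j}(t)`, where `u_{θ,j}(t)` is the score
`(∂m_θ(t)/∂θ_j)/m_θ(t)`; consequently `θ` is a stationary point of `G` iff it solves the
weighted estimating equation `∑_t ω(δ_θ(t)) d(t) u_{θ,j}(t) = 0` for every `j`. -/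
theorem weighted_estimating_equation {N k : ℕ} (hN : 1 ≤ N)
    (Θ : Set (Fin k → ℝ)) (hΘ : IsOpen Θ)
    (m : (Fin k → ℝ) → Fin N → ℝ) (hm : ∀ θ ∈ Θ, IsPPV (m θ))
    (d : Fin N → ℝ) (hd : IsPPV d)
    (π : ℝ) (hπ : π ∈ Set.Ioo (0 : ℝ) 1)
    (θ : Fin k → ℝ) (hθ : θ ∈ Θ)
    (Dm : Fin N → ((Fin k → ℝ) →L[ℝ] ℝ))
    (hDm : ∀ t, HasFDerivAt (fun θ' => m θ' t) (Dm t) θ) :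
    ∃ DG : (Fin k → ℝ) →L[ℝ] ℝ,
      HasFDerivAt
        (fun θ' => π * Lsq d (fun t => π * d t + (1 - π) * m θ' t)
          + (1 - π) * Ksq (fun t => π * d t + (1 - π) * m θ' t) (m θ')) DG θ ∧
      (∀ j : Fin k,
        DG (Pi.single j 1) =
          -(1 - π) * ∑ t, tubeWeight π (pearson d (m θ) t) * d t
            * (Dm t (Pi.single j 1) / m θ t)) ∧
      (DG = 0 ↔ ∀ j : Fin k,
        ∑ t, tubeWeight π (pearson d (m θ) t) * d t * (Dm t (Pi.single j 1) / m θ t) = 0) := by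

  obtain ⟨hπ0, hπ1⟩ := hπ
  have h1π : 0 < 1 - π := by linarith
  obtain ⟨hmpos, hmsum⟩ := hm θ hθ
  set p : Fin N → ℝ := fun t => π * d t + (1 - π) * m θ t with hp_def
  have hp : ∀ t, 0 < p t := fun t => by
    have := hd.1 t; have := hmpos t; positivity
  set c : Fin N → ℝ := fun t => (1 - π) * Real.log (m θ t / p t) with hc_def
  have hval : ∀ j : Fin k, (∑ t, c t • Dm t) (Pi.single j 1)
      = -(1 - π) * ∑ t, tubeWeight π (pearson d (m θ) t) * d t
          * (Dm t (Pi.single j 1) / m θ t) := by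
    intro j
    have hDmsum : (∑ t, Dm t) = 0 := by
      have hsum : HasFDerivAt (fun θ' => ∑ t, m θ' t) (∑ t, Dm t) θ :=
        HasFDerivAt.fun_sum fun t _ => hDm t
      have h0 : HasFDerivAt (fun θ' : Fin k → ℝ => ∑ t, m θ' t) (0 : (Fin k → ℝ) →L[ℝ] ℝ) θ := by
        refine (hasFDerivAt_const (1 : ℝ) θ).congr_of_eventuallyEq ?_
        filter_upwards [hΘ.mem_nhds hθ] with θ' hθ' using (hm θ' hθ').2
      exact hsum.unique h0
    have hw0 : ∑ t, Dm t (Pi.single j 1) = 0 := by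
      have := congrArg (fun (f : (Fin k → ℝ) →L[ℝ] ℝ) => f (Pi.single j 1)) hDmsum
      simpa using this
    have hterm : ∀ t, tubeWeight π (pearson d (m θ) t) * d t * (Dm t (Pi.single j 1) / m θ t)
        = (Real.log (p t) - Real.log (1 - π) - Real.log (m θ t)) * Dm t (Pi.single j 1) := by
      intro t
      have hm0 := (hmpos t).ne'
      have hd0 := (hd.1 t).ne'
      have h1δ : 1 + pearson d (m θ) t = d t / m θ t := by
        unfold pearson; field_simp; ring
      have hA : 1 + π * (d t / m θ t) / (1 - π) = p t / ((1 - π) * m θ t) := by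
        rw [hp_def]
        field_simp
        ring
      have hlog : Real.log (p t / ((1 - π) * m θ t))
          = Real.log (p t) - Real.log (1 - π) - Real.log (m θ t) := by
        rw [Real.log_div (hp t).ne' (by positivity),
          Real.log_mul h1π.ne' hm0]
        ring
      unfold tubeWeight
      rw [add_comm (pearson d (m θ) t) 1, h1δ, hA, hlog]
      have hdm : d t / m θ t ≠ 0 := by positivity
      field_simp
    have hcval : ∀ t, c t = (1 - π) * (Real.log (m θ t) - Real.log (p t)) := by
      intro t
      simp only [hc_def]
      rw [Real.log_div (hmpos t).ne' (hp t).ne']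
    rw [Finset.mul_sum]
    simp only [ContinuousLinearMap.sum_apply, ContinuousLinearMap.smul_apply, smul_eq_mul]
    calc ∑ t, c t * Dm t (Pi.single j 1)
        = ∑ t, (-(1 - π) * ((Real.log (p t) - Real.log (1 - π) - Real.log (m θ t))
            * Dm t (Pi.single j 1)) - (1 - π) * Real.log (1 - π) * Dm t (Pi.single j 1)) := by
          refine Finset.sum_congr rfl fun t _ => ?_
          rw [hcval t]; ring
      _ = ∑ t, -(1 - π) * (tubeWeight π (pearson d (m θ) t) * d t
            * (Dm t (Pi.single j 1) / m θ t)) := by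
          have hz : ∑ x, (1 - π) * Real.log (1 - π) * Dm x (Pi.single j 1) = 0 := by
            rw [← Finset.mul_sum, hw0, mul_zero]
          rw [Finset.sum_sub_distrib, hz, sub_zero]
          exact Finset.sum_congr rfl fun t _ => by rw [hterm t]
  refine ⟨∑ t, c t • Dm t, ?_, hval, ?_⟩
  · -- derivative
    have hfun : (fun θ' => π * Lsq d (fun t => π * d t + (1 - π) * m θ' t)
          + (1 - π) * Ksq (fun t => π * d t + (1 - π) * m θ' t) (m θ'))
        = fun θ' => ∑ t, (π * (d t * Real.log (d t / (π * d t + (1 - π) * m θ' t)))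
          + (1 - π) * (m θ' t * Real.log (m θ' t / (π * d t + (1 - π) * m θ' t)))) := by
      funext θ'
      simp [Lsq, Ksq, Finset.mul_sum, Finset.sum_add_distrib]
    rw [hfun]
    exact HasFDerivAt.fun_sum fun t _ => by
      have h := (aux_deriv π (d t) (m θ t) hπ0 hπ1 (hd.1 t) (hmpos t)).comp_hasFDerivAt θ (hDm t)
      exact h
  · constructor
    · intro h j
      have h2 := hval j
      rw [h] at h2
      simp only [ContinuousLinearMap.zero_apply] at h2
      rcases mul_eq_zero.mp h2.symm with h' | h'
      · exact absurd h' (by intro hc; rw [neg_eq_zero] at hc; linarith)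
      · exact h'
    · intro h
      have hz : ∀ j, (∑ t, c t • Dm t) (Pi.single j 1) = 0 := fun j => by
        rw [hval j, h j, mul_zero]
      refine ContinuousLinearMap.ext fun v => ?_
      have hv : v = ∑ j, v j • (Pi.single j 1 : Fin k → ℝ) := by
        ext i
        simp [Pi.single_apply]
      rw [ContinuousLinearMap.zero_apply]
      conv_lhs => rw [hv]
      rw [map_sum]
      simp [hz]
end

section
/- Let τ be a probability vector and m a positive probability vector on a finite set T. Consider the set S = {π ∈ [0,1] : there exists a probability vector e on T with τ = (1−π)·m + π·e} of admissible mixture weights in the two-point mixture representation of τ over m. Then S is nonempty (it contains π = 1) and its minimum — the mixture index of fit π*(τ, m) — equals max_t (1 − τ(t)/m(t)); in particular this maximum lies in [0,1]. -/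
open Finset

/-- The set of admissible mixture weights `π ∈ [0,1]` for which the true distribution `τ`
can be written as the two-point mixture `τ = (1−π) m + π e` with `e` a probability vector. -/
def mixWeights {N : ℕ} (τ m : Fin N → ℝ) : Set ℝ :=
  {π : ℝ | π ∈ Set.Icc (0 : ℝ) 1 ∧
    ∃ e : Fin N → ℝ, (∀ t, 0 ≤ e t) ∧ (∑ t, e t = 1) ∧
      ∀ t, τ t = (1 - π) * m t + π * e t}

/-- For `τ` a probability vector and `m` a positive probability vector, the set of
admissible mixture weights contains `π = 1`, and its least element — the mixture index of
fit `π*(τ, m)` — equals `max_t (1 − τ(t)/m(t))`, which moreover lies in `[0,1]`. -/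
theorem mixture_index_formula {N : ℕ} (hN : 1 ≤ N)
    (τ m : Fin N → ℝ)
    (hτ : (∀ t, 0 ≤ τ t) ∧ ∑ t, τ t = 1)
    (hm : (∀ t, 0 < m t) ∧ ∑ t, m t = 1) :
    (1 : ℝ) ∈ mixWeights τ m ∧
    IsLeast (mixWeights τ m)
      (Finset.univ.sup' ⟨⟨0, hN⟩, Finset.mem_univ _⟩ (fun t => 1 - τ t / m t)) ∧
    Finset.univ.sup' ⟨⟨0, hN⟩, Finset.mem_univ _⟩ (fun t => 1 - τ t / m t)
      ∈ Set.Icc (0 : ℝ) 1 := by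
  obtain ⟨hτ0, hτ1⟩ := hτ
  obtain ⟨hm0, hm1⟩ := hm
  have hne : (Finset.univ : Finset (Fin N)).Nonempty := ⟨⟨0, hN⟩, Finset.mem_univ _⟩
  set P := Finset.univ.sup' ⟨⟨0, hN⟩, Finset.mem_univ _⟩ (fun t => 1 - τ t / m t) with hPdef
  have hP1 : P ≤ 1 := by
    apply Finset.sup'_le
    intro t _
    have := div_nonneg (hτ0 t) (hm0 t).le
    linarith
  have hle : ∀ t, 1 - τ t / m t ≤ P := fun t =>
    Finset.le_sup' (fun t => 1 - τ t / m t) (Finset.mem_univ t)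
  have hP0 : 0 ≤ P := by
    by_contra h
    push_neg at h
    have hlt : ∀ t ∈ Finset.univ, m t < τ t := by
      intro t _
      have h1 := hle t
      have h2 : 1 < τ t / m t := by linarith
      rw [lt_div_iff₀ (hm0 t)] at h2
      linarith
    have := Finset.sum_lt_sum_of_nonempty hne hlt
    rw [hm1, hτ1] at this
    exact lt_irrefl 1 this
  have hkey : ∀ t, (1 - P) * m t ≤ τ t := by
    intro t
    have h1 := hle t
    have h2 : 1 - P ≤ τ t / m t := by linarith
    rw [le_div_iff₀ (hm0 t)] at h2
    linarith
  refine ⟨⟨⟨zero_le_one, le_refl 1⟩, τ, hτ0, hτ1, fun t => by ring⟩, ⟨⟨⟨hP0, hP1⟩, ?_⟩, ?_⟩,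
    hP0, hP1⟩
  · by_cases h : P = 0
    · refine ⟨m, fun t => (hm0 t).le, hm1, fun t => ?_⟩
      have heq : ∀ t, τ t = m t := by
        intro t
        by_contra hne'
        have hlt : m ⟨0, hN⟩ ≤ τ ⟨0, hN⟩ := by have := hkey ⟨0, hN⟩; rw [h] at this; linarith
        have hall : ∀ s ∈ Finset.univ, m s ≤ τ s := by
          intro s _
          have := hkey s; rw [h] at this; linarith
        have hstrict : m t < τ t := lt_of_le_of_ne (hall t (Finset.mem_univ t))
          (fun hc => hne' hc.symm)
        have := Finset.sum_lt_sum hall ⟨t, Finset.mem_univ t, hstrict⟩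
        rw [hm1, hτ1] at this
        exact lt_irrefl 1 this
      rw [heq t, h]; ring
    · have hPpos : 0 < P := lt_of_le_of_ne hP0 (Ne.symm h)
      refine ⟨fun t => (τ t - (1 - P) * m t) / P, fun t => ?_, ?_, fun t => ?_⟩
      · exact div_nonneg (by linarith [hkey t]) hPpos.le
      · rw [← Finset.sum_div, Finset.sum_sub_distrib, ← Finset.mul_sum, hτ1, hm1]
        field_simp
        ring
      · field_simp
        ring
  · rintro π ⟨⟨hπ0, hπ1⟩, e, he0, -, heq⟩
    apply Finset.sup'_le
    intro t _
    have h1 := heq t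
    have h2 := he0 t
    have h3 : (1 - π) * m t ≤ τ t := by nlinarith
    have h4 : 1 - π ≤ τ t / m t := (le_div_iff₀ (hm0 t)).mpr h3
    linarith
end

section
/- Let d and m₀ be two distinct positive probability vectors on a finite set T. Then the function g(π) = L²(d, π·d + (1−π)·m₀) is strictly decreasing on the interval [0,1], with g(1) = 0; thus as the mixing weight π increases toward 1 the likelihood distance from the data d to the convex combination decreases monotonically to zero. -/
open Finset

/-- Strict Gibbs inequality. -/
lemma gibbs_strict {N : ℕ} {d p : Fin N → ℝ} (hd : IsPPV d) (hp : IsPPV p) (hne : p ≠ d) :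
    0 < Lsq d p := by
  obtain ⟨t0, ht0⟩ : ∃ t, p t ≠ d t := by
    by_contra h; push_neg at h; exact hne (funext h)
  have key : ∑ t, d t * Real.log (p t / d t) < 0 := by
    have hle : ∀ t ∈ Finset.univ, d t * Real.log (p t / d t) ≤ p t - d t := by
      intro t _
      have hpt := hp.1 t; have hdt := hd.1 t
      have h1 : Real.log (p t / d t) ≤ p t / d t - 1 :=
        Real.log_le_sub_one_of_pos (div_pos hpt hdt)
      calc d t * Real.log (p t / d t) ≤ d t * (p t / d t - 1) :=
            mul_le_mul_of_nonneg_left h1 hdt.le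
        _ = p t - d t := by field_simp
    have hlt : d t0 * Real.log (p t0 / d t0) < p t0 - d t0 := by
      have hpt := hp.1 t0; have hdt := hd.1 t0
      have h1 : Real.log (p t0 / d t0) < p t0 / d t0 - 1 := by
        apply Real.log_lt_sub_one_of_pos (div_pos hpt hdt)
        intro h
        apply ht0
        field_simp at h
        linarith
      calc d t0 * Real.log (p t0 / d t0) < d t0 * (p t0 / d t0 - 1) :=
            (mul_lt_mul_iff_right₀ hdt).mpr h1
        _ = p t0 - d t0 := by field_simp
    have hsum := Finset.sum_lt_sum hle ⟨t0, Finset.mem_univ t0, hlt⟩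
    have hs : ∑ t, (p t - d t) = 0 := by
      rw [Finset.sum_sub_distrib, hp.2, hd.2]; ring
    linarith
  have heq : Lsq d p = -∑ t, d t * Real.log (p t / d t) := by
    unfold Lsq
    rw [← Finset.sum_neg_distrib]
    apply Finset.sum_congr rfl
    intro t _
    rw [show d t / p t = (p t / d t)⁻¹ from (inv_div _ _).symm, Real.log_inv]; ring
  rw [heq]
  linarith

/-- For distinct positive probability vectors `d` and `m₀`, the likelihood distance
`g(π) = L²(d, π d + (1-π) m₀)` is strictly decreasing in the mixing weight `π` on `[0,1]`,
and it vanishes at `π = 1`. -/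
theorem likelihood_distance_decreasing {N : ℕ} (hN : 1 ≤ N)
    (d m₀ : Fin N → ℝ) (hd : IsPPV d) (hm : IsPPV m₀) (hne : d ≠ m₀) :
    StrictAntiOn (fun π : ℝ => Lsq d (fun t => π * d t + (1 - π) * m₀ t))
      (Set.Icc (0 : ℝ) 1) ∧
    Lsq d (fun t => (1 : ℝ) * d t + (1 - 1) * m₀ t) = 0 := by
  -- positivity of mixtures
  have hpos : ∀ π : ℝ, 0 ≤ π → π ≤ 1 → ∀ t, 0 < π * d t + (1 - π) * m₀ t := by
    intro π h0 h1 t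
    rcases h0.lt_or_eq with hπ | hπ
    · have h2 := mul_pos hπ (hd.1 t)
      have h3 := mul_nonneg (sub_nonneg.2 h1) (hm.1 t).le
      linarith
    · have := hm.1 t
      rw [← hπ]; ring_nf; linarith
  have hPPV : ∀ π : ℝ, 0 ≤ π → π ≤ 1 → IsPPV (fun t => π * d t + (1 - π) * m₀ t) := by
    intro π h0 h1
    refine ⟨hpos π h0 h1, ?_⟩
    rw [Finset.sum_add_distrib, ← Finset.mul_sum, ← Finset.mul_sum, hd.2, hm.2]; ring
  obtain ⟨t1, ht1⟩ : ∃ t, d t ≠ m₀ t := by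
    by_contra h; push_neg at h; exact hne (funext h)
  constructor
  · intro x hx y hy hxy
    simp only
    obtain ⟨hx0, hx1⟩ := hx
    obtain ⟨hy0, hy1⟩ := hy
    have hx1' : x < 1 := lt_of_lt_of_le hxy hy1
    have hx1'' : (0:ℝ) < 1 - x := by linarith
    set lam : ℝ := (1 - y) / (1 - x) with hlam
    have hlam0 : 0 ≤ lam := div_nonneg (by linarith) hx1''.le
    have hlam1 : lam < 1 := by
      rw [div_lt_one hx1'']; linarith
    -- g x > 0
    have hmixne : (fun t => x * d t + (1 - x) * m₀ t) ≠ d := by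
      intro h
      have := congrFun h t1
      apply ht1
      have h2 : (1 - x) * (m₀ t1 - d t1) = 0 := by ring_nf; ring_nf at this; linarith
      rcases mul_eq_zero.mp h2 with h3 | h3
      · linarith
      · linarith
    have hgx : 0 < Lsq d (fun t => x * d t + (1 - x) * m₀ t) :=
      gibbs_strict hd (hPPV x hx0 hx1) hmixne
    -- mixture identity
    have hmixeq : ∀ t, y * d t + (1 - y) * m₀ t
        = lam * (x * d t + (1 - x) * m₀ t) + (1 - lam) * d t := by
      intro t
      rw [hlam]
      field_simp
      ring
    -- termwise bound
    have hterm : ∀ t ∈ Finset.univ,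
        d t * Real.log (d t / (y * d t + (1 - y) * m₀ t))
          ≤ lam * (d t * Real.log (d t / (x * d t + (1 - x) * m₀ t))) := by
      intro t _
      have hdt := hd.1 t
      have hmx := hpos x hx0 hx1 t
      have hmy := hpos y hy0 hy1 t
      have hconc : lam * Real.log (x * d t + (1 - x) * m₀ t) + (1 - lam) * Real.log (d t)
          ≤ Real.log (y * d t + (1 - y) * m₀ t) := by
        have := (strictConcaveOn_log_Ioi).concaveOn.2 (Set.mem_Ioi.mpr hmx)
          (Set.mem_Ioi.mpr hdt) hlam0 (by linarith : (0:ℝ) ≤ 1 - lam) (by ring)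
        simp only [smul_eq_mul] at this
        rw [hmixeq t]
        exact this
      have hlog : Real.log (d t / (y * d t + (1 - y) * m₀ t))
          ≤ lam * Real.log (d t / (x * d t + (1 - x) * m₀ t)) := by
        rw [Real.log_div hdt.ne' hmy.ne', Real.log_div hdt.ne' hmx.ne']
        nlinarith [hconc]
      calc d t * Real.log (d t / (y * d t + (1 - y) * m₀ t))
          ≤ d t * (lam * Real.log (d t / (x * d t + (1 - x) * m₀ t))) :=
            mul_le_mul_of_nonneg_left hlog hdt.le
        _ = lam * (d t * Real.log (d t / (x * d t + (1 - x) * m₀ t))) := by ring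
    have hsum : Lsq d (fun t => y * d t + (1 - y) * m₀ t)
        ≤ lam * Lsq d (fun t => x * d t + (1 - x) * m₀ t) := by
      unfold Lsq
      rw [Finset.mul_sum]
      exact Finset.sum_le_sum hterm
    nlinarith
  · unfold Lsq
    apply Finset.sum_eq_zero
    intro t _
    simp [div_self (hd.1 t).ne']
end
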